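/- arXiv:2307.12474 — 3 statements merged into one kernel-verified Lean document; each statement's English description precedes it below -/
import Mathlib

section
/- Let G be an abelian definable group in an o-minimal structure, and let G⁰ be a definable subgroup of G of finite index that is contained in every definable subgroup of G of finite index (the definably connected component of the identity). Then G is monogenic — i.e., there exists g ∈ G such that the only definable subgroup of G containing g is G — if and only if both: (a) G⁰ is monogenic, i.e., there exists h ∈ G⁰ such that every definable subgroup of G containing h contains G⁰; and (b) the finite quotient group G/G⁰ is cyclic. -/
open FirstOrder FirstOrder.Language

/-- A subset of a linearly ordered set is a finite union of points and open intervals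
(with endpoints in the set or `±∞`). -/
def IsFinUnionOfPointsAndOpenIntervals {M : Type*} [LinearOrder M] (s : Set M) : Prop :=
  ∃ I : Finset (Set M), s = ⋃₀ ↑I ∧ ∀ t ∈ I,
    (∃ a : M, t = {a}) ∨ (∃ a b : M, t = Set.Ioo a b) ∨
      (∃ a : M, t = Set.Ioi a) ∨ (∃ a : M, t = Set.Iio a) ∨ t = Set.univ

/-- An `L`-structure `M` carrying a linear order is o-minimal if every subset of `M` definable
with parameters from `M` is a finite union of points and open intervals. -/
def IsOMinimalStructure (L : FirstOrder.Language) (M : Type*) [L.Structure M]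
    [LinearOrder M] : Prop :=
  ∀ s : Set M, Set.Definable₁ (Set.univ : Set M) L s → IsFinUnionOfPointsAndOpenIntervals s

/-- `ι` realizes the group `G` as a definable group in the structure `M`: `ι` identifies `G`
with a definable subset of `M^n`, and the graph of multiplication is a definable subset
of `M^{3n}`. -/
def IsDefinableGroupEmbedding (L : FirstOrder.Language) (M : Type*) [L.Structure M]
    {n : ℕ} {G : Type*} [Group G] (ι : G → (Fin n → M)) : Prop :=
  Function.Injective ι ∧
    Set.Definable (Set.univ : Set M) L (Set.range ι) ∧
    Set.Definable (Set.univ : Set M) L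
      {f : (Fin n ⊕ Fin n) ⊕ Fin n → M |
        ∃ a b : G, f = Sum.elim (Sum.elim (ι a) (ι b)) (ι (a * b))}

/-- A subgroup of a definable group is definable when its underlying set (viewed inside `M^n`)
is definable with parameters. -/
def IsDefinableSubgroup (L : FirstOrder.Language) (M : Type*) [L.Structure M]
    {n : ℕ} {G : Type*} [Group G] (ι : G → (Fin n → M)) (H : Subgroup G) : Prop :=
  Set.Definable (Set.univ : Set M) L (ι '' (H : Set G))

/-! ### Auxiliary definability lemmas -/

open Pointwise

section DefinabilityHelpers

variable {L : FirstOrder.Language} {M : Type*} [L.Structure M]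

lemma definable_coord_eq {α : Type*} (i : α) (c : M) :
    (Set.univ : Set M).Definable L {f : α → M | f i = c} := by
  refine ⟨(Term.var i).equal ((L.con (⟨c, Set.mem_univ c⟩ : (Set.univ : Set M))).term), ?_⟩
  ext f
  simp [Formula.realize_equal]

lemma definable_fun_singleton {α : Type*} [Finite α] (x : α → M) :
    (Set.univ : Set M).Definable L ({x} : Set (α → M)) := by
  classical
  cases nonempty_fintype α
  have h : ({x} : Set (α → M)) = ⋂ i ∈ (Finset.univ : Finset α), {f : α → M | f i = x i} := by
    ext f
    simp [funext_iff]
  rw [h]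
  exact Set.definable_biInter_finset (fun i => definable_coord_eq i (x i)) _

end DefinabilityHelpers

section GroupHelpers

variable {L : FirstOrder.Language} {M : Type*} [L.Structure M]
  {n : ℕ} {G : Type*} [CommGroup G] {ι : G → (Fin n → M)}

lemma definable_image_mul (hG : IsDefinableGroupEmbedding L M ι)
    {s t : Set G} (hs : (Set.univ : Set M).Definable L (ι '' s))
    (ht : (Set.univ : Set M).Definable L (ι '' t)) :
    (Set.univ : Set M).Definable L (ι '' (s * t)) := by
  obtain ⟨hinj, -, hgraph⟩ := hG
  have hU := (hgraph.inter (hs.preimage_comp (Sum.inl ∘ Sum.inl))).inter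
      (ht.preimage_comp (Sum.inl ∘ Sum.inr))
  have himg := hU.image_comp (Sum.inr : Fin n → (Fin n ⊕ Fin n) ⊕ Fin n)
  have key : ι '' (s * t) =
      (fun f : ((Fin n ⊕ Fin n) ⊕ Fin n) → M => f ∘ Sum.inr) ''
        (({f : ((Fin n ⊕ Fin n) ⊕ Fin n) → M |
            ∃ a b : G, f = Sum.elim (Sum.elim (ι a) (ι b)) (ι (a * b))} ∩
          ((fun f : ((Fin n ⊕ Fin n) ⊕ Fin n) → M => f ∘ (Sum.inl ∘ Sum.inl)) ⁻¹' (ι '' s))) ∩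
          ((fun f : ((Fin n ⊕ Fin n) ⊕ Fin n) → M => f ∘ (Sum.inl ∘ Sum.inr)) ⁻¹' (ι '' t))) := by
    ext z
    constructor
    · rintro ⟨w, hw, rfl⟩
      rw [Set.mem_mul] at hw
      obtain ⟨a, ha, b, hb, rfl⟩ := hw
      exact ⟨Sum.elim (Sum.elim (ι a) (ι b)) (ι (a * b)),
        ⟨⟨⟨a, b, rfl⟩, ⟨a, ha, funext fun i => rfl⟩⟩, ⟨b, hb, funext fun i => rfl⟩⟩,
        funext fun i => rfl⟩
    · rintro ⟨F, ⟨⟨⟨a, b, rfl⟩, hFs⟩, hFt⟩, rfl⟩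
      obtain ⟨a', ha', ha2⟩ := hFs
      obtain ⟨b', hb', hb2⟩ := hFt
      have haa : a' = a := hinj (ha2.trans (funext fun i => rfl))
      have hbb : b' = b := hinj (hb2.trans (funext fun i => rfl))
      subst haa hbb
      exact ⟨a' * b', Set.mul_mem_mul ha' hb', (funext fun i => rfl)⟩
  rw [key]
  exact himg

lemma definable_image_coset (hG : IsDefinableGroupEmbedding L M ι)
    {s : Set G} (hs : (Set.univ : Set M).Definable L (ι '' s)) (c : G) :
    (Set.univ : Set M).Definable L (ι '' ((fun x => c * x) '' s)) := by
  have h1 : (fun x => c * x) '' s = {c} * s := (Set.singleton_mul).symm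
  rw [h1]
  have hc : (Set.univ : Set M).Definable L (ι '' ({c} : Set G)) := by
    rw [Set.image_singleton]; exact definable_fun_singleton (ι c)
  exact definable_image_mul ⟨hG.1, hG.2.1, hG.2.2⟩ hc hs

/-- The graph of the `k`-th power map, inside `M^{2n}`. -/
def powGraph (ι : G → (Fin n → M)) (k : ℕ) : Set ((Fin n ⊕ Fin n) → M) :=
  {f | ∃ a : G, f = Sum.elim (ι a) (ι (a ^ k))}

lemma definable_powGraph (hG : IsDefinableGroupEmbedding L M ι) (k : ℕ) :
    (Set.univ : Set M).Definable L (powGraph ι k) := by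
  obtain ⟨hinj, hrange, hgraph⟩ := hG
  induction k with
  | zero =>
    have key : powGraph ι 0 =
        ((fun f : (Fin n ⊕ Fin n) → M => f ∘ Sum.inl) ⁻¹' Set.range ι) ∩
        ((fun f : (Fin n ⊕ Fin n) → M => f ∘ Sum.inr) ⁻¹' ({ι 1} : Set (Fin n → M))) := by
      ext f
      constructor
      · rintro ⟨a, rfl⟩
        exact ⟨⟨a, funext fun i => rfl⟩, funext fun i => by simp⟩
      · rintro ⟨⟨a, ha⟩, h1⟩
        refine ⟨a, ?_⟩
        have hf : f = Sum.elim (f ∘ Sum.inl) (f ∘ Sum.inr) := (Sum.elim_comp_inl_inr f).symm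
        rw [hf, ha]
        simp only [Set.mem_preimage, Set.mem_singleton_iff] at h1
        rw [h1]
        simp
    rw [key]
    exact (hrange.preimage_comp _).inter ((definable_fun_singleton (ι 1)).preimage_comp _)
  | succ k ih =>
    have key : powGraph ι (k + 1) =
        (fun F : ((Fin n ⊕ Fin n) ⊕ Fin n) → M => F ∘ (Sum.elim (Sum.inl ∘ Sum.inl) Sum.inr)) ''
          (((fun F : ((Fin n ⊕ Fin n) ⊕ Fin n) → M => F ∘ Sum.inl) ⁻¹' powGraph ι k) ∩
           ((fun F : ((Fin n ⊕ Fin n) ⊕ Fin n) → M =>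
              F ∘ (Sum.elim (Sum.elim (Sum.inl ∘ Sum.inr) (Sum.inl ∘ Sum.inl)) Sum.inr)) ⁻¹'
              {f : ((Fin n ⊕ Fin n) ⊕ Fin n) → M |
                ∃ a b : G, f = Sum.elim (Sum.elim (ι a) (ι b)) (ι (a * b))})) := by
      ext f
      constructor
      · rintro ⟨a, rfl⟩
        refine ⟨Sum.elim (Sum.elim (ι a) (ι (a ^ k))) (ι (a ^ (k + 1))),
          ⟨⟨a, funext fun i => by cases i <;> rfl⟩, ⟨a ^ k, a, ?_⟩⟩,
          funext fun i => by cases i <;> rfl⟩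
        have hpow : a ^ (k + 1) = a ^ k * a := pow_succ a k
        funext i
        rcases i with (i | i) | i <;> simp [hpow]
      · rintro ⟨F, ⟨hFk, hFg⟩, rfl⟩
        obtain ⟨a, ha⟩ := hFk
        obtain ⟨u, v, huv⟩ := hFg
        have h1 : F ∘ (Sum.inl ∘ Sum.inl) = ι a := funext fun i => congrFun ha (Sum.inl i)
        have h2 : F ∘ (Sum.inl ∘ Sum.inr) = ι (a ^ k) := funext fun i => congrFun ha (Sum.inr i)
        have hu : ι u = ι (a ^ k) := by
          rw [← h2]; exact funext fun i => (congrFun huv (Sum.inl (Sum.inl i))).symm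
        have hv : ι v = ι a := by
          rw [← h1]; exact funext fun i => (congrFun huv (Sum.inl (Sum.inr i))).symm
        have hu' : u = a ^ k := hinj hu
        have hv' : v = a := hinj hv
        have h3 : F ∘ Sum.inr = ι (u * v) := funext fun i => congrFun huv (Sum.inr i)
        refine ⟨a, ?_⟩
        funext i
        rcases i with i | i
        · exact congrFun h1 i
        · have : (F ∘ Sum.inr) i = ι (a ^ (k + 1)) i := by
            rw [h3, hu', hv', ← pow_succ]
          exact this
    rw [key]
    exact ((ih.preimage_comp _).inter (hgraph.preimage_comp _)).image_comp _

lemma definable_image_pow (hG : IsDefinableGroupEmbedding L M ι) (k : ℕ)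
    {s : Set G} (hs : (Set.univ : Set M).Definable L (ι '' s)) :
    (Set.univ : Set M).Definable L (ι '' ((fun x => x ^ k) '' s)) := by
  have key : ι '' ((fun x => x ^ k) '' s) =
      (fun f : (Fin n ⊕ Fin n) → M => f ∘ Sum.inr) ''
        (powGraph ι k ∩ ((fun f : (Fin n ⊕ Fin n) → M => f ∘ Sum.inl) ⁻¹' (ι '' s))) := by
    ext z
    constructor
    · rintro ⟨w, ⟨a, ha, rfl⟩, rfl⟩
      exact ⟨Sum.elim (ι a) (ι (a ^ k)), ⟨⟨a, rfl⟩, ⟨a, ha, funext fun i => rfl⟩⟩,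
        funext fun i => rfl⟩
    · rintro ⟨F, ⟨⟨a, rfl⟩, hFs⟩, rfl⟩
      obtain ⟨a', ha', ha2⟩ := hFs
      have haa : a' = a := hG.1 (ha2.trans (funext fun i => rfl))
      subst haa
      exact ⟨a' ^ k, ⟨a', ha', rfl⟩, funext fun i => rfl⟩
  rw [key]
  exact ((definable_powGraph ⟨hG.1, hG.2.1, hG.2.2⟩ k).inter (hs.preimage_comp _)).image_comp _

end GroupHelpers

/-! ### Group-theoretic decomposition lemmas -/

section GroupDecomp

variable {G : Type*} [CommGroup G]

lemma exists_decomp_sup_zpowers {K : Subgroup G} {g : G} {k : ℕ} (hk : 0 < k)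
    (hgk : g ^ k ∈ K) {x : G} (hx : x ∈ K ⊔ Subgroup.zpowers g) :
    ∃ r : ℕ, r < k ∧ ∃ c ∈ K, x = g ^ r * c := by
  obtain ⟨y, hy, z, hz, rfl⟩ := Subgroup.mem_sup.mp hx
  obtain ⟨j, rfl⟩ := Subgroup.mem_zpowers_iff.mp hz
  have hk0 : (k : ℤ) ≠ 0 := by exact_mod_cast hk.ne'
  have hj : j = k * (j / k) + j % k := (Int.mul_ediv_add_emod j k).symm
  have hnn : 0 ≤ j % k := Int.emod_nonneg j hk0
  have hltZ : j % k < (k : ℤ) := Int.emod_lt_of_pos j (by exact_mod_cast hk)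
  set r : ℕ := (j % k).toNat with hr
  have hrj : ((r : ℤ)) = j % k := Int.toNat_of_nonneg hnn
  have hrk : r < k := by omega
  have hzsplit : g ^ j = (g ^ k) ^ (j / k) * g ^ r := by
    have hjj : g ^ j = g ^ ((k : ℤ) * (j / k) + j % k) := by rw [← hj]
    rw [hjj, zpow_add, zpow_mul, zpow_natCast, ← hrj, zpow_natCast]
  refine ⟨r, hrk, y * (g ^ k) ^ (j / k), K.mul_mem hy (K.zpow_mem hgk _), ?_⟩
  rw [hzsplit, mul_comm ((g ^ k) ^ (j / (k:ℤ))) (g ^ r), ← mul_assoc, mul_comm y (g ^ r),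
    mul_assoc]

lemma coe_sup_zpowers {K : Subgroup G} {g : G} {k : ℕ} (hk : 0 < k) (hgk : g ^ k ∈ K) :
    ((K ⊔ Subgroup.zpowers g : Subgroup G) : Set G) =
      ⋃ r ∈ Finset.range k, (fun x => g ^ r * x) '' (K : Set G) := by
  ext x
  simp only [Set.mem_iUnion, Finset.mem_range, Set.mem_image, SetLike.mem_coe]
  constructor
  · intro hx
    obtain ⟨r, hrk, c, hc, rfl⟩ := exists_decomp_sup_zpowers hk hgk hx
    exact ⟨r, hrk, c, hc, rfl⟩
  · rintro ⟨r, hrk, c, hc, rfl⟩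
    exact Subgroup.mul_mem _
      (Subgroup.mem_sup_right (Subgroup.mem_zpowers_iff.mpr ⟨(r : ℤ), by rw [zpow_natCast]⟩))
      (Subgroup.mem_sup_left hc)

end GroupDecomp

/-! ### Definability of subgroup constructions -/

section SubgroupDefinability

variable {L : FirstOrder.Language} {M : Type*} [L.Structure M]
  {n : ℕ} {G : Type*} [CommGroup G] {ι : G → (Fin n → M)}

lemma IsDefinableSubgroup.inf (hG : IsDefinableGroupEmbedding L M ι) {H K : Subgroup G}
    (hH : IsDefinableSubgroup L M ι H) (hK : IsDefinableSubgroup L M ι K) :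
    IsDefinableSubgroup L M ι (H ⊓ K) := by
  unfold IsDefinableSubgroup at *
  have hHK : ((H ⊓ K : Subgroup G) : Set G) = (H : Set G) ∩ (K : Set G) := rfl
  rw [hHK, Set.image_inter hG.1]
  exact hH.inter hK

lemma isDefinableSubgroup_sup_zpowers (hG : IsDefinableGroupEmbedding L M ι) {K : Subgroup G}
    (hK : IsDefinableSubgroup L M ι K) {g : G} {k : ℕ} (hk : 0 < k) (hgk : g ^ k ∈ K) :
    IsDefinableSubgroup L M ι (K ⊔ Subgroup.zpowers g) := by
  unfold IsDefinableSubgroup at *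
  rw [coe_sup_zpowers hk hgk, Set.image_iUnion₂]
  exact Set.definable_biUnion_finset (fun r => definable_image_coset hG hK (g ^ r)) _

lemma isDefinableSubgroup_of_le (hG : IsDefinableGroupEmbedding L M ι) {G0 H : Subgroup G}
    (hG0def : IsDefinableSubgroup L M ι G0) (hG0fin : G0.FiniteIndex) (hle : G0 ≤ H) :
    IsDefinableSubgroup L M ι H := by
  classical
  haveI := hG0fin
  haveI : Finite (G ⧸ G0) := G0.finite_quotient_of_finiteIndex
  cases nonempty_fintype (G ⧸ G0)
  have key : (H : Set G) = ⋃ q ∈ (Finset.univ : Finset (G ⧸ G0)),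
      (if Quotient.out q ∈ H then (fun x => Quotient.out q * x) '' (G0 : Set G) else ∅) := by
    ext x
    simp only [Set.mem_iUnion, Finset.mem_univ, SetLike.mem_coe, exists_prop, true_and]
    constructor
    · intro hx
      set q : G ⧸ G0 := QuotientGroup.mk x with hq
      have hout : (QuotientGroup.mk (Quotient.out q) : G ⧸ G0) = QuotientGroup.mk x :=
        QuotientGroup.out_eq' q
      have hmem : (Quotient.out q)⁻¹ * x ∈ G0 := QuotientGroup.eq.mp hout
      have houtH : Quotient.out q ∈ H := by
        have hxo : Quotient.out q = x * ((Quotient.out q)⁻¹ * x)⁻¹ := by group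
        rw [hxo]
        exact H.mul_mem hx (H.inv_mem (hle hmem))
      refine ⟨q, ?_⟩
      rw [if_pos houtH]
      exact ⟨(Quotient.out q)⁻¹ * x, hmem, by group⟩
    · rintro ⟨q, hq⟩
      by_cases houtH : Quotient.out q ∈ H
      · rw [if_pos houtH] at hq
        obtain ⟨c, hc, rfl⟩ := hq
        exact H.mul_mem houtH (hle hc)
      · rw [if_neg houtH] at hq
        exact absurd hq (Set.notMem_empty x)
  unfold IsDefinableSubgroup
  rw [key, Set.image_iUnion₂]
  refine Set.definable_biUnion_finset (fun q => ?_) _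
  by_cases houtH : Quotient.out q ∈ H
  · rw [if_pos houtH]
    exact definable_image_coset hG hG0def _
  · rw [if_neg houtH]
    rw [Set.image_empty]
    exact Set.definable_empty

end SubgroupDefinability

/-- An abelian definable group `G` in an o-minimal structure, with `G⁰` its definably
connected component of the identity (a definable finite-index subgroup contained in every
definable finite-index subgroup), is monogenic if and only if `G⁰` is monogenic and the
finite quotient `G/G⁰` is cyclic. -/
theorem abelian_definable_group_monogenic_iff
    (L : FirstOrder.Language) (M : Type*) [L.Structure M]
    [LinearOrder M] [DenselyOrdered M] [NoMinOrder M] [NoMaxOrder M] [Nontrivial M]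
    (ltSymb : L.Relations 2)
    (hlt : ∀ a b : M, Structure.RelMap ltSymb ![a, b] ↔ a < b)
    (homin : IsOMinimalStructure L M)
    {n : ℕ} {G : Type*} [CommGroup G] (ι : G → (Fin n → M))
    (hG : IsDefinableGroupEmbedding L M ι)
    (G0 : Subgroup G) (hG0def : IsDefinableSubgroup L M ι G0)
    (hG0fin : G0.FiniteIndex)
    (hG0min : ∀ H : Subgroup G, IsDefinableSubgroup L M ι H → H.FiniteIndex → G0 ≤ H) :
    (∃ g : G, ∀ H : Subgroup G, IsDefinableSubgroup L M ι H → g ∈ H → H = ⊤) ↔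
      ((∃ h ∈ G0, ∀ H : Subgroup G, IsDefinableSubgroup L M ι H → h ∈ H → G0 ≤ H) ∧
        IsCyclic (G ⧸ G0)) := by
  haveI := hG0fin
  haveI : Finite (G ⧸ G0) := G0.finite_quotient_of_finiteIndex
  set m := G0.index with hm
  have hm0 : 0 < m := Nat.pos_of_ne_zero hG0fin.index_ne_zero
  constructor
  · rintro ⟨g, hg⟩
    set gbar : G ⧸ G0 := QuotientGroup.mk g with hgbar
    have hgen : ∀ x : G ⧸ G0, x ∈ Subgroup.zpowers gbar := by
      set H : Subgroup G := Subgroup.comap (QuotientGroup.mk' G0) (Subgroup.zpowers gbar) with hH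
      have hle : G0 ≤ H := by
        intro x hx
        simp only [hH, Subgroup.mem_comap, QuotientGroup.mk'_apply]
        have hx1 : (QuotientGroup.mk x : G ⧸ G0) = 1 := (QuotientGroup.eq_one_iff x).mpr hx
        rw [hx1]
        exact Subgroup.one_mem _
      have hHdef := isDefinableSubgroup_of_le hG hG0def hG0fin hle
      have hHtop : H = ⊤ := hg H hHdef (by
        simp only [hH, Subgroup.mem_comap, QuotientGroup.mk'_apply]
        exact Subgroup.mem_zpowers _)
      intro x
      obtain ⟨y, rfl⟩ := QuotientGroup.mk_surjective x
      have hy : y ∈ H := hHtop ▸ Subgroup.mem_top y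
      simpa only [hH, Subgroup.mem_comap, QuotientGroup.mk'_apply] using hy
    have hcyc : IsCyclic (G ⧸ G0) := ⟨⟨gbar, hgen⟩⟩
    have horder : orderOf gbar = m := by
      rw [orderOf_eq_card_of_forall_mem_zpowers hgen, hm, Subgroup.index_eq_card]
    refine ⟨⟨g ^ m, G0.pow_index_mem g, ?_⟩, hcyc⟩
    intro H hHdef hgmH
    set K : Subgroup G := H ⊓ G0 with hK
    have hKdef : IsDefinableSubgroup L M ι K := IsDefinableSubgroup.inf hG hHdef hG0def
    have hgmK : g ^ m ∈ K := ⟨hgmH, G0.pow_index_mem g⟩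
    have hSdef := isDefinableSubgroup_sup_zpowers hG hKdef hm0 hgmK
    have hStop : K ⊔ Subgroup.zpowers g = ⊤ :=
      hg _ hSdef (Subgroup.mem_sup_right (Subgroup.mem_zpowers g))
    intro x hx
    have hxS : x ∈ K ⊔ Subgroup.zpowers g := hStop ▸ Subgroup.mem_top x
    obtain ⟨r, hrk, c, hc, rfl⟩ := exists_decomp_sup_zpowers hm0 hgmK hxS
    have hgr : g ^ r ∈ G0 := by
      have hc0 : c ∈ G0 := hc.2
      have hmul := G0.mul_mem hx (G0.inv_mem hc0)
      have hrw : g ^ r * c * c⁻¹ = g ^ r := by group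
      rwa [hrw] at hmul
    have h1 : gbar ^ r = 1 := by
      rw [hgbar, ← QuotientGroup.mk_pow]
      exact (QuotientGroup.eq_one_iff _).mpr hgr
    have hdvd : m ∣ r := horder ▸ orderOf_dvd_of_pow_eq_one h1
    have hr0 : r = 0 := Nat.eq_zero_of_dvd_of_lt hdvd hrk
    rw [hr0, pow_zero, one_mul]
    exact hc.1
  · rintro ⟨⟨h, hh0, hh⟩, hcyc⟩
    -- `G0` is divisible: key consequence of definable monogenicity of `G0`
    have hdiv : ∀ k : ℕ, 0 < k → ∀ x ∈ G0, ∃ s ∈ G0, s ^ k = x := by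
      intro k hk x hx
      set Q : Subgroup G := G0.map (powMonoidHom k) with hQ
      have hQdef : IsDefinableSubgroup L M ι Q := by
        unfold IsDefinableSubgroup
        have hQc : (Q : Set G) = (fun y => y ^ k) '' (G0 : Set G) := by
          rw [hQ, Subgroup.coe_map]; rfl
        rw [hQc]
        exact definable_image_pow hG k hG0def
      have hhk : h ^ k ∈ Q := ⟨h, hh0, rfl⟩
      have hWdef := isDefinableSubgroup_sup_zpowers hG hQdef hk hhk
      have hW : G0 ≤ Q ⊔ Subgroup.zpowers h :=
        hh _ hWdef (Subgroup.mem_sup_right (Subgroup.mem_zpowers h))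
      have hfinQ : Finite (G ⧸ Q) := by
        have hsurj : Function.Surjective
            (fun p : (G ⧸ G0) × Fin k =>
              (QuotientGroup.mk (Quotient.out p.1 * h ^ (p.2 : ℕ)) : G ⧸ Q)) := by
          intro xb
          obtain ⟨x, rfl⟩ := QuotientGroup.mk_surjective xb
          have hout : (QuotientGroup.mk (Quotient.out (QuotientGroup.mk x : G ⧸ G0)) : G ⧸ G0)
              = QuotientGroup.mk x := QuotientGroup.out_eq' _
          have hx0 : (Quotient.out (QuotientGroup.mk x : G ⧸ G0))⁻¹ * x ∈ G0 :=
            QuotientGroup.eq.mp hout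
          obtain ⟨r, hrk, c, hcQ, hdec⟩ := exists_decomp_sup_zpowers hk hhk (hW hx0)
          refine ⟨(QuotientGroup.mk x, ⟨r, hrk⟩), ?_⟩
          show (QuotientGroup.mk (Quotient.out (QuotientGroup.mk x : G ⧸ G0) * h ^ r) : G ⧸ Q)
              = QuotientGroup.mk x
          rw [QuotientGroup.eq]
          have hfin : (Quotient.out (QuotientGroup.mk x : G ⧸ G0) * h ^ r)⁻¹ * x = c := by
            rw [mul_inv_rev, mul_assoc, hdec, inv_mul_cancel_left]
          rw [hfin]
          exact hcQ
        exact Finite.of_surjective _ hsurj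
      haveI := hfinQ
      have hQfin : Q.FiniteIndex := Q.finiteIndex_of_finite_quotient
      obtain ⟨s, hs, hsx⟩ := hG0min Q hQdef hQfin hx
      exact ⟨s, hs, hsx⟩
    obtain ⟨q, hq⟩ := hcyc.exists_generator
    obtain ⟨a, rfl⟩ := QuotientGroup.mk_surjective q
    have ham : a ^ m ∈ G0 := G0.pow_index_mem a
    obtain ⟨s, hs, hsm⟩ := hdiv m hm0 ((a ^ m)⁻¹ * h) (G0.mul_mem (G0.inv_mem ham) hh0)
    refine ⟨a * s, ?_⟩
    intro H hHdef hgH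
    have hgm : (a * s) ^ m = h := by
      rw [mul_pow, hsm]; group
    have hhH : h ∈ H := hgm ▸ H.pow_mem hgH m
    have hG0H : G0 ≤ H := hh H hHdef hhH
    rw [eq_top_iff]
    intro x _
    have hxz : (QuotientGroup.mk x : G ⧸ G0) ∈ Subgroup.zpowers (QuotientGroup.mk a) := hq _
    obtain ⟨j, hj⟩ := Subgroup.mem_zpowers_iff.mp hxz
    have hms : (QuotientGroup.mk (a * s) : G ⧸ G0) = QuotientGroup.mk a := by
      rw [QuotientGroup.eq]
      have hss : (a * s)⁻¹ * a = s⁻¹ := by group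
      rw [hss]
      exact G0.inv_mem hs
    have hj' : (QuotientGroup.mk ((a * s) ^ j) : G ⧸ G0) = QuotientGroup.mk x := by
      rw [QuotientGroup.mk_zpow, hms, hj]
    have hdiff : ((a * s) ^ j)⁻¹ * x ∈ G0 := QuotientGroup.eq.mp hj'
    have hxw : x = (a * s) ^ j * (((a * s) ^ j)⁻¹ * x) := by group
    rw [hxw]
    exact H.mul_mem (H.zpow_mem hgH j) (hG0H hdiff)
end

section
/- Let I be a finite index set, let (H_i)_{i ∈ I} be a family of simple groups, and for each i let x_i ∈ H_i be an element of finite order n_i with n_i > 1, such that the orders n_i are pairwise coprime. Then the normal closure in the direct product ∏_{i ∈ I} H_i of the single element (x_i)_{i ∈ I} is the whole group ∏_{i ∈ I} H_i. -/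
/-- If `(H i)` is a finite family of simple groups and `x i ∈ H i` are elements of finite
orders `m i > 1` that are pairwise coprime, then the normal closure of the single element
`(x i)_i` in the direct product `∀ i, H i` is the whole group. -/
theorem normalClosure_single_element_pi_simple_eq_top
    {I : Type*} [Finite I] (H : I → Type*) [∀ i, Group (H i)] [∀ i, IsSimpleGroup (H i)]
    (x : ∀ i, H i) (m : I → ℕ)
    (hord : ∀ i, orderOf (x i) = m i) (hone : ∀ i, 1 < m i)
    (hcop : ∀ i j, i ≠ j → Nat.Coprime (m i) (m j)) :
    Subgroup.normalClosure {x} = ⊤ := by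
  classical
  cases nonempty_fintype I
  set N := Subgroup.normalClosure {x} with hN
  have hxN : x ∈ N := Subgroup.subset_normalClosure rfl
  -- for each i, the single element with any value is in N
  have key : ∀ i (h : H i), Pi.mulSingle i h ∈ N := by
    intro i h
    set k : ℕ := ∏ j ∈ Finset.univ.erase i, m j with hk
    -- x ^ k = mulSingle i (x i ^ k)
    have hxk : x ^ k = Pi.mulSingle i (x i ^ k) := by
      funext j
      by_cases hji : j = i
      · subst hji; simp
      · have hdvd : m j ∣ k := Finset.dvd_prod_of_mem _ (by simp [hji])
        have : x j ^ k = 1 :=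
          orderOf_dvd_iff_pow_eq_one.mp (by rw [hord j]; exact hdvd)
        simp [this, Pi.mulSingle, Function.update, hji, Pi.pow_apply]
    have hcopk : Nat.Coprime (m i) k := by
      apply Nat.Coprime.prod_right
      intro j hj
      exact hcop i j (by simp at hj; exact fun e => hj (e.symm)) |>.symm.symm
    have hne : x i ^ k ≠ 1 := by
      intro he
      have : m i ∣ k := by
        rw [← hord i]; exact orderOf_dvd_of_pow_eq_one he
      have h1 : m i = 1 := Nat.Coprime.eq_one_of_dvd hcopk this
      have := hone i
      omega
    -- comap N along mulSingle
    have hnormal : (N.comap (MonoidHom.mulSingle H i)).Normal :=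
      (Subgroup.normalClosure_normal).comap _
    have hmem : x i ^ k ∈ N.comap (MonoidHom.mulSingle H i) := by
      simp only [Subgroup.mem_comap, MonoidHom.mulSingle_apply]
      rw [← hxk]
      exact pow_mem hxN k
    have htop : Subgroup.normalClosure {x i ^ k} = ⊤ := by
      rcases IsSimpleGroup.eq_bot_or_eq_top_of_normal (Subgroup.normalClosure {x i ^ k})
          Subgroup.normalClosure_normal with hb | ht
      · exfalso
        have : x i ^ k ∈ (⊥ : Subgroup (H i)) := hb ▸ Subgroup.subset_normalClosure rfl
        exact hne (Subgroup.mem_bot.mp this)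
      · exact ht
    have hle : Subgroup.normalClosure {x i ^ k} ≤ N.comap (MonoidHom.mulSingle H i) :=
      Subgroup.normalClosure_le_normal (by simpa using hmem)
    have : h ∈ N.comap (MonoidHom.mulSingle H i) := hle (htop ▸ Subgroup.mem_top h)
    simpa using this
  -- every element is a product of singles
  rw [eq_top_iff]
  intro f _
  have hf : f = Finset.univ.noncommProd (fun i => Pi.mulSingle i (f i))
      (fun i _ j _ _ => Pi.mulSingle_apply_commute f i j) :=
    (Finset.noncommProd_mulSingle f).symm
  rw [hf]
  exact Subgroup.noncommProd_mem _ _ (fun i _ => key i (f i))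
end

section
/- Consider the first-order language of ordered rings extended by one unary predicate symbol, and ℝ as a structure for this language with the standard ordered-field interpretation and the predicate interpreted as the set ℤ of integers. Then for every finite subset X of ℝ, the subgroup of (ℝ, +) generated by X is a proper subgroup of ℝ whose underlying set is definable with parameters in this structure. In particular, (ℝ, +) is not definably finitely generated in this structure: no finite subset X of ℝ has the property that the only definable subgroup of (ℝ, +) containing X is ℝ. -/
open FirstOrder

/-- Function symbols of the language of ordered rings: `+`, `·`, `-` (negation), `0`, `1`. -/
inductive OrdRingFunc : ℕ → Type
  | add : OrdRingFunc 2
  | mul : OrdRingFunc 2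
  | neg : OrdRingFunc 1
  | zero : OrdRingFunc 0
  | one : OrdRingFunc 0

/-- Relation symbols of the language of ordered rings extended by one unary predicate symbol:
the order relation `<` and a unary predicate `Z`. -/
inductive OrdRingZRel : ℕ → Type
  | lt : OrdRingZRel 2
  | int : OrdRingZRel 1

/-- The first-order language of ordered rings (symbols `+, ·, -, 0, 1, <`) extended by one
unary predicate symbol. -/
def ordRingZLang : FirstOrder.Language :=
  ⟨OrdRingFunc, OrdRingZRel⟩

/-- `ℝ` as a structure for the language of ordered rings with one extra unary predicate:
the ordered-field symbols get their standard interpretations and the unary predicate is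
interpreted as the set `ℤ` of integers. -/
instance realOrdRingZStructure : ordRingZLang.Structure ℝ where
  funMap {_} f x :=
    match f with
    | .add => x 0 + x 1
    | .mul => x 0 * x 1
    | .neg => -(x 0)
    | .zero => 0
    | .one => 1
  RelMap {_} r x :=
    match r with
    | .lt => x 0 < x 1
    | .int => ∃ m : ℤ, x 0 = (m : ℝ)

open Set Language

/-- The singleton `{0}` is definable. -/
lemma defin_zero : (Set.univ : Set ℝ).Definable₁ ordRingZLang ({0} : Set ℝ) := by
  refine ⟨Term.equal (Term.var 0) (Term.func (Sum.inl OrdRingFunc.zero) ![]), ?_⟩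
  ext v
  simp only [Formula.Realize, Term.equal, mem_setOf_eq, BoundedFormula.realize_bdEqual,
    Term.realize, mem_singleton_iff]
  exact Iff.rfl

/-- The set of integer multiples of a real number is definable. -/
lemma defin_zmul (a : ℝ) :
    (Set.univ : Set ℝ).Definable₁ ordRingZLang {x : ℝ | ∃ m : ℤ, x = (m : ℝ) * a} := by
  have hZ : (Set.univ : Set ℝ).Definable ordRingZLang {v : Fin 2 → ℝ | ∃ m : ℤ, v 1 = (m : ℝ)} := by
    refine ⟨Relations.formula (Sum.inl OrdRingZRel.int) ![Term.var 1], ?_⟩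
    ext v
    simp only [Formula.Realize, Relations.formula, mem_setOf_eq, BoundedFormula.realize_rel,
      Term.realize]
    exact Iff.rfl
  have hE : (Set.univ : Set ℝ).Definable ordRingZLang {v : Fin 2 → ℝ | v 0 = v 1 * a} := by
    refine ⟨Term.equal (Term.var 0) (Term.func (Sum.inl OrdRingFunc.mul)
      ![Term.var 1, Constants.term (ordRingZLang.con (⟨a, trivial⟩ : (Set.univ : Set ℝ)))]), ?_⟩
    ext v
    simp only [Formula.Realize, Term.equal, mem_setOf_eq, BoundedFormula.realize_bdEqual,
      Term.realize]
    exact Iff.rfl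
  have h := (hZ.inter hE).image_comp (fun _ : Fin 1 => (0 : Fin 2))
  show (Set.univ : Set ℝ).Definable ordRingZLang {x : Fin 1 → ℝ | x 0 ∈ {x : ℝ | ∃ m : ℤ, x = (m : ℝ) * a}}
  refine (congr rfl ?_).mp h
  ext w
  simp only [mem_image, mem_inter_iff, mem_setOf_eq]
  constructor
  · rintro ⟨g, ⟨⟨m, hm⟩, hg⟩, rfl⟩
    exact ⟨m, by rw [← hm]; exact hg⟩
  · rintro ⟨m, hm⟩
    refine ⟨![w 0, (m : ℝ)], ⟨⟨m, rfl⟩, hm⟩, ?_⟩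
    funext i
    fin_cases i
    rfl

/-- The pointwise sum of two definable sets is definable. -/
lemma defin_add {S T : Set ℝ} (hS : (Set.univ : Set ℝ).Definable₁ ordRingZLang S)
    (hT : (Set.univ : Set ℝ).Definable₁ ordRingZLang T) :
    (Set.univ : Set ℝ).Definable₁ ordRingZLang (Set.image2 (· + ·) S T) := by
  have hS' := hS.preimage_comp (fun _ : Fin 1 => (1 : Fin 3))
  have hT' := hT.preimage_comp (fun _ : Fin 1 => (2 : Fin 3))
  have hE : (Set.univ : Set ℝ).Definable ordRingZLang {v : Fin 3 → ℝ | v 0 = v 1 + v 2} := by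
    refine ⟨Term.equal (Term.var 0) (Term.func (Sum.inl OrdRingFunc.add)
      ![Term.var 1, Term.var 2]), ?_⟩
    ext v
    simp only [Formula.Realize, Term.equal, mem_setOf_eq, BoundedFormula.realize_bdEqual,
      Term.realize]
    exact Iff.rfl
  have h := ((hS'.inter hT').inter hE).image_comp (fun _ : Fin 1 => (0 : Fin 3))
  show (Set.univ : Set ℝ).Definable ordRingZLang {x : Fin 1 → ℝ | x 0 ∈ Set.image2 (· + ·) S T}
  refine (congr rfl ?_).mp h
  ext w
  simp only [mem_image, mem_inter_iff, mem_setOf_eq, mem_preimage, Function.comp_apply]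
  constructor
  · rintro ⟨g, ⟨⟨h1, h2⟩, hg⟩, rfl⟩
    exact mem_image2.mpr ⟨g 1, h1, g 2, h2, hg.symm⟩
  · intro hw
    obtain ⟨y, hy, z, hz, hyz⟩ := mem_image2.mp hw
    refine ⟨![w 0, y, z], ⟨⟨hy, hz⟩, hyz.symm⟩, ?_⟩
    funext i
    fin_cases i
    rfl


/-- In the real ordered field expanded by a predicate for `ℤ`, the subgroup of `(ℝ, +)`
generated by any finite set `X ⊆ ℝ` is a proper definable subgroup; in particular, `(ℝ, +)`
is not definably finitely generated in this structure: no finite subset of `ℝ` definably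
generates `(ℝ, +)`. -/
theorem real_additive_group_not_definably_finitely_generated_with_int_predicate :
    (∀ X : Finset ℝ,
      AddSubgroup.closure (X : Set ℝ) ≠ ⊤ ∧
        Set.Definable₁ (Set.univ : Set ℝ) ordRingZLang
          ((AddSubgroup.closure (X : Set ℝ) : AddSubgroup ℝ) : Set ℝ)) ∧
      ¬ ∃ X : Finset ℝ, ∀ H : AddSubgroup ℝ,
          Set.Definable₁ (Set.univ : Set ℝ) ordRingZLang (H : Set ℝ) →
          (X : Set ℝ) ⊆ (H : Set ℝ) → H = ⊤ := by
  have main : ∀ X : Finset ℝ,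
      AddSubgroup.closure (X : Set ℝ) ≠ ⊤ ∧
        Set.Definable₁ (Set.univ : Set ℝ) ordRingZLang
          ((AddSubgroup.closure (X : Set ℝ) : AddSubgroup ℝ) : Set ℝ) := by
    intro X
    constructor
    · -- properness: the closure is countable but ℝ is not
      intro htop
      have hcount : ((AddSubgroup.closure (X : Set ℝ) : AddSubgroup ℝ) : Set ℝ).Countable := by
        have : (X : Set ℝ) = Set.range (fun x : (X : Set ℝ) => (x : ℝ)) := by
          rw [Subtype.range_coe]
        have hc : Countable (Submodule.span ℤ (X : Set ℝ)) := by
          rw [this]; infer_instance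
        have hsp : (Submodule.span ℤ (X : Set ℝ) : Set ℝ).Countable :=
          Set.countable_coe_iff.mp hc
        have h2 := Submodule.span_int_eq_addSubgroupClosure (M := ℝ) (X : Set ℝ)
        rw [← h2, Submodule.coe_toAddSubgroup]
        exact hsp
      rw [htop] at hcount
      exact Cardinal.not_countable_real (by simpa using hcount)
    · -- definability, by induction on the finite set
      classical
      induction X using Finset.induction_on with
      | empty =>
          simp only [Finset.coe_empty, AddSubgroup.closure_empty]
          exact defin_zero
      | @insert a s ha ih =>
          have hset : ((AddSubgroup.closure ((insert a s : Finset ℝ) : Set ℝ) : AddSubgroup ℝ) : Set ℝ)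
              = Set.image2 (· + ·) {x : ℝ | ∃ m : ℤ, x = (m : ℝ) * a}
                ((AddSubgroup.closure (s : Set ℝ) : AddSubgroup ℝ) : Set ℝ) := by
            ext x
            simp only [Finset.coe_insert, SetLike.mem_coe, mem_image2, mem_setOf_eq]
            rw [show (insert a (s : Set ℝ)) = {a} ∪ (s : Set ℝ) by simp,
              AddSubgroup.closure_union, AddSubgroup.mem_sup]
            constructor
            · rintro ⟨y, hy, z, hz, rfl⟩
              obtain ⟨m, hm⟩ := AddSubgroup.mem_closure_singleton.mp hy
              exact ⟨y, ⟨m, by rw [← hm, zsmul_eq_mul]⟩, z, hz, rfl⟩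
            · rintro ⟨y, ⟨m, rfl⟩, z, hz, rfl⟩
              exact ⟨(m : ℝ) * a, AddSubgroup.mem_closure_singleton.mpr ⟨m, (zsmul_eq_mul a m) ▸ rfl⟩,
                z, hz, rfl⟩
          rw [hset]
          exact defin_add (defin_zmul a) ih
  refine ⟨main, ?_⟩
  rintro ⟨X, hX⟩
  obtain ⟨hne, hdef⟩ := main X
  exact hne (hX _ hdef AddSubgroup.subset_closure)
end
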